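/- Let f : ℝ^d → ℝ^d be globally Lipschitz and continuously differentiable with Jacobian A(θ) = Df(θ), suppose θ ↦ ‖f(θ)‖ is coercive, suppose f has a unique zero θ* ∈ ℝ^d, suppose A(θ)ᵀ f(θ) ≠ 0 for every θ ≠ θ*, and suppose A(θ*) is nonsingular. Let ε > 0. Then the regularized Newton–Raphson flow is globally asymptotically stable: every differentiable solution w : [0,∞) → ℝ^d satisfies lim_{t→∞} w(t) = θ*, and the equilibrium θ* is stable in the sense of Lyapunov. -/

import Mathlib

open Matrix Filter Topology

/-- `w : [0,∞) → ℝ^d` is a (differentiable) solution of the regularized Newton–Raphson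
flow `d/dt w(t) = −[εI + A(w(t))ᵀ A(w(t))]⁻¹ A(w(t))ᵀ f(w(t))`. -/
def IsRegNRFlowSol (d : ℕ) (ε : ℝ)
    (f : EuclideanSpace ℝ (Fin d) → EuclideanSpace ℝ (Fin d))
    (A : EuclideanSpace ℝ (Fin d) → Matrix (Fin d) (Fin d) ℝ)
    (w : ℝ → EuclideanSpace ℝ (Fin d)) : Prop :=
  ∀ t : ℝ, 0 ≤ t → HasDerivAt w
    (-(Matrix.toEuclideanCLM (𝕜 := ℝ)
        ((ε • (1 : Matrix (Fin d) (Fin d) ℝ) + (A (w t))ᵀ * A (w t))⁻¹ * (A (w t))ᵀ)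
      (f (w t)))) t

section NRauxSection

open RealInnerProductSpace

namespace NRaux

variable {d : ℕ}

noncomputable abbrev T (M : Matrix (Fin d) (Fin d) ℝ) :
    EuclideanSpace ℝ (Fin d) →L[ℝ] EuclideanSpace ℝ (Fin d) :=
  Matrix.toEuclideanCLM (𝕜 := ℝ) M

lemma adj_apply (M : Matrix (Fin d) (Fin d) ℝ) (x y : EuclideanSpace ℝ (Fin d)) :
    ⟪T Mᵀ x, y⟫ = ⟪x, T M y⟫ := by
  have h : T Mᵀ = ContinuousLinearMap.adjoint (T M) := by
    rw [← ContinuousLinearMap.star_eq_adjoint, ← map_star]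
    simp [Matrix.star_eq_conjTranspose, Matrix.conjTranspose_eq_transpose_of_trivial]
  rw [h, ContinuousLinearMap.adjoint_inner_left]

lemma posdefC (ε : ℝ) (hε : 0 < ε) (M : Matrix (Fin d) (Fin d) ℝ) :
    (ε • (1 : Matrix (Fin d) (Fin d) ℝ) + Mᵀ * M).PosDef := by
  have h1 : (ε • (1 : Matrix (Fin d) (Fin d) ℝ)).PosDef := by
    rw [Matrix.smul_one_eq_diagonal]
    exact Matrix.PosDef.diagonal fun _ => hε
  have h2 : (Mᵀ * M).PosSemidef := by
    have := Matrix.posSemidef_conjTranspose_mul_self M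
    rwa [Matrix.conjTranspose_eq_transpose_of_trivial] at this
  exact h1.add_posSemidef h2

lemma adj_apply' (M : Matrix (Fin d) (Fin d) ℝ) (x y : EuclideanSpace ℝ (Fin d)) :
    ⟪T M x, y⟫ = ⟪x, T Mᵀ y⟫ := by
  have := adj_apply (d := d) Mᵀ x y
  rwa [Matrix.transpose_transpose] at this

lemma Tmul (P Q : Matrix (Fin d) (Fin d) ℝ) : T (P * Q) = T P * T Q := map_mul _ P Q

lemma Tone : T (1 : Matrix (Fin d) (Fin d) ℝ) = 1 := map_one _

lemma Tadd (P Q : Matrix (Fin d) (Fin d) ℝ) : T (P + Q) = T P + T Q := map_add _ P Q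

lemma Tsmul (c : ℝ) (P : Matrix (Fin d) (Fin d) ℝ) : T (c • P) = c • T P := map_smul _ c P

lemma TC_Tinv (ε : ℝ) (hε : 0 < ε) (M : Matrix (Fin d) (Fin d) ℝ)
    (x : EuclideanSpace ℝ (Fin d)) :
    T (ε • 1 + Mᵀ * M) (T (ε • 1 + Mᵀ * M)⁻¹ x) = x := by
  have hdet : IsUnit (ε • (1 : Matrix (Fin d) (Fin d) ℝ) + Mᵀ * M).det :=
    (posdefC ε hε M).det_pos.ne'.isUnit
  rw [← ContinuousLinearMap.mul_apply, ← Tmul, Matrix.mul_nonsing_inv _ hdet, Tone,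
    ContinuousLinearMap.one_apply]

lemma quad_eq (ε : ℝ) (hε : 0 < ε) (M : Matrix (Fin d) (Fin d) ℝ)
    (u : EuclideanSpace ℝ (Fin d)) :
    ⟪T (M * (ε • 1 + Mᵀ * M)⁻¹ * Mᵀ) u, u⟫ =
      ε * ‖T (ε • 1 + Mᵀ * M)⁻¹ (T Mᵀ u)‖ ^ 2 +
        ‖T M (T (ε • 1 + Mᵀ * M)⁻¹ (T Mᵀ u))‖ ^ 2 := by
  set C : Matrix (Fin d) (Fin d) ℝ := ε • 1 + Mᵀ * M with hCdef
  set z : EuclideanSpace ℝ (Fin d) := T C⁻¹ (T Mᵀ u) with hz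
  have hCz : T C z = T Mᵀ u := TC_Tinv ε hε M (T Mᵀ u)
  have h1 : T (M * C⁻¹ * Mᵀ) u = T M z := by
    rw [Tmul, Tmul, ContinuousLinearMap.mul_apply, ContinuousLinearMap.mul_apply]
  rw [h1, adj_apply' M z u, ← hCz]
  have hsplit : T C z = ε • z + T Mᵀ (T M z) := by
    rw [hCdef, Tadd, Tsmul, Tone, Tmul]
    rw [ContinuousLinearMap.add_apply, ContinuousLinearMap.mul_apply,
      ContinuousLinearMap.smul_apply, ContinuousLinearMap.one_apply]
  rw [hsplit, inner_add_right, real_inner_smul_right, real_inner_self_eq_norm_sq]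
  congr 1
  rw [real_inner_comm, adj_apply M (T M z) z, real_inner_self_eq_norm_sq]

lemma quad_nonneg (ε : ℝ) (hε : 0 < ε) (M : Matrix (Fin d) (Fin d) ℝ)
    (u : EuclideanSpace ℝ (Fin d)) :
    0 ≤ ⟪T (M * (ε • 1 + Mᵀ * M)⁻¹ * Mᵀ) u, u⟫ := by
  rw [quad_eq ε hε M u]
  positivity

lemma quad_pos (ε : ℝ) (hε : 0 < ε) (M : Matrix (Fin d) (Fin d) ℝ)
    (u : EuclideanSpace ℝ (Fin d)) (hu : T Mᵀ u ≠ 0) :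
    0 < ⟪T (M * (ε • 1 + Mᵀ * M)⁻¹ * Mᵀ) u, u⟫ := by
  rw [quad_eq ε hε M u]
  have hzne : T (ε • 1 + Mᵀ * M)⁻¹ (T Mᵀ u) ≠ 0 := by
    intro h0
    apply hu
    rw [← TC_Tinv ε hε M (T Mᵀ u), h0, map_zero]
  have h1 : 0 < ε * ‖T (ε • 1 + Mᵀ * M)⁻¹ (T Mᵀ u)‖ ^ 2 := by
    have := norm_pos_iff.mpr hzne
    positivity
  have h2 : 0 ≤ ‖T M (T (ε • 1 + Mᵀ * M)⁻¹ (T Mᵀ u))‖ ^ 2 := by positivity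
  linarith

noncomputable def Tlin :
    Matrix (Fin d) (Fin d) ℝ →ₗ[ℝ] (EuclideanSpace ℝ (Fin d) →L[ℝ] EuclideanSpace ℝ (Fin d)) where
  toFun M := T M
  map_add' a b := map_add _ a b
  map_smul' c a := map_smul _ c a

lemma contT : Continuous fun M : Matrix (Fin d) (Fin d) ℝ => T M :=
  (Tlin (d := d)).continuous_of_finiteDimensional

lemma cont_inv {X : Type*} [TopologicalSpace X] {C : X → Matrix (Fin d) (Fin d) ℝ}
    (hC : Continuous C) (hdet : ∀ x, (C x).det ≠ 0) :
    Continuous fun x => (C x)⁻¹ := by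
  have : (fun x => (C x)⁻¹) = fun x => ((C x).det)⁻¹ • (C x).adjugate := by
    funext x
    rw [Matrix.inv_def, Ring.inverse_eq_inv']
  rw [this]
  exact (hC.matrix_det.inv₀ hdet).smul hC.matrix_adjugate

end NRaux

end NRauxSection

open RealInnerProductSpace in
/-- Under the assumptions: `f` globally Lipschitz and continuously
differentiable with Jacobian `A`, `‖f‖` coercive, `f` has the unique zero `θ*`,
`A(θ)ᵀ f(θ) ≠ 0` for `θ ≠ θ*`, and `A(θ*)` nonsingular, the regularized Newton–Raphson
flow is globally asymptotically stable: every differentiable solution converges to `θ*`,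
and `θ*` is stable in the sense of Lyapunov. -/
theorem stmt_3 (d : ℕ)
    (f : EuclideanSpace ℝ (Fin d) → EuclideanSpace ℝ (Fin d))
    (K : NNReal) (hLip : LipschitzWith K f)
    (A : EuclideanSpace ℝ (Fin d) → Matrix (Fin d) (Fin d) ℝ)
    (hf : ∀ θ, HasFDerivAt f (Matrix.toEuclideanCLM (𝕜 := ℝ) (A θ)) θ)
    (hA : Continuous A)
    (hcoercive : ∀ r : ℝ, IsCompact {θ : EuclideanSpace ℝ (Fin d) | ‖f θ‖ ≤ r})
    (θstar : EuclideanSpace ℝ (Fin d))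
    (hzero : f θstar = 0)
    (huniq : ∀ θ, f θ = 0 → θ = θstar)
    (hAf : ∀ θ, θ ≠ θstar → Matrix.toEuclideanCLM (𝕜 := ℝ) ((A θ)ᵀ) (f θ) ≠ 0)
    (hAstar : IsUnit (A θstar))
    (ε : ℝ) (hε : 0 < ε) :
    (∀ w : ℝ → EuclideanSpace ℝ (Fin d), IsRegNRFlowSol d ε f A w →
        Tendsto w atTop (𝓝 θstar)) ∧
      (∀ δ : ℝ, 0 < δ → ∃ δ' : ℝ, 0 < δ' ∧
        ∀ w : ℝ → EuclideanSpace ℝ (Fin d), IsRegNRFlowSol d ε f A w →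
          ‖w 0 - θstar‖ ≤ δ' → ∀ t : ℝ, 0 ≤ t → ‖w t - θstar‖ ≤ δ) := by
  classical
  have hfc : Continuous f := hLip.continuous
  -- the Lyapunov decrease rate
  set φ : EuclideanSpace ℝ (Fin d) → ℝ := fun θ =>
    ⟪NRaux.T (A θ * (ε • 1 + (A θ)ᵀ * A θ)⁻¹ * (A θ)ᵀ) (f θ), f θ⟫ with hφdef
  have hφ_nonneg : ∀ θ, 0 ≤ φ θ := fun θ => NRaux.quad_nonneg ε hε (A θ) (f θ)
  have hφ_pos : ∀ θ, θ ≠ θstar → 0 < φ θ := fun θ hθ =>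
    NRaux.quad_pos ε hε (A θ) (f θ) (hAf θ hθ)
  -- continuity of φ
  have hdet : ∀ θ, (ε • (1 : Matrix (Fin d) (Fin d) ℝ) + (A θ)ᵀ * A θ).det ≠ 0 := fun θ =>
    (NRaux.posdefC ε hε (A θ)).det_pos.ne'
  have hCc : Continuous fun θ => ε • (1 : Matrix (Fin d) (Fin d) ℝ) + (A θ)ᵀ * A θ :=
    continuous_const.add (hA.matrix_transpose.matrix_mul hA)
  have hBc : Continuous fun θ => (ε • (1 : Matrix (Fin d) (Fin d) ℝ) + (A θ)ᵀ * A θ)⁻¹ :=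
    NRaux.cont_inv hCc hdet
  have hPc : Continuous fun θ => A θ * (ε • 1 + (A θ)ᵀ * A θ)⁻¹ * (A θ)ᵀ :=
    (hA.matrix_mul hBc).matrix_mul hA.matrix_transpose
  have hφ_cont : Continuous φ := by
    rw [hφdef]
    exact Continuous.inner ((NRaux.contT.comp hPc).clm_apply hfc) hfc
  -- the radius lemma
  have hR : ∀ δ : ℝ, 0 < δ → ∃ r : ℝ, 0 < r ∧
      ∀ θ : EuclideanSpace ℝ (Fin d), ‖f θ‖ ≤ r → ‖θ - θstar‖ ≤ δ := by
    intro δ hδ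
    set Ks : Set (EuclideanSpace ℝ (Fin d)) :=
      {θ | ‖f θ‖ ≤ 1} ∩ {θ | δ ≤ ‖θ - θstar‖} with hKs
    have hKcpt : IsCompact Ks :=
      (hcoercive 1).inter_right
        (isClosed_le continuous_const (continuous_id.sub continuous_const).norm)
    rcases Ks.eq_empty_or_nonempty with he | hne
    · refine ⟨1, one_pos, fun θ hθ => ?_⟩
      by_contra hgt
      push_neg at hgt
      exact Set.eq_empty_iff_forall_notMem.mp he θ ⟨hθ, hgt.le⟩
    · obtain ⟨θ₀, hθ₀K, hmin⟩ := hKcpt.exists_isMinOn hne hfc.norm.continuousOn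
      have hθ₀ne : θ₀ ≠ θstar := by
        intro h
        have h2 := hθ₀K.2
        rw [h] at h2
        simp only [Set.mem_setOf_eq, sub_self, norm_zero] at h2
        linarith
      have hm : 0 < ‖f θ₀‖ := by
        rw [norm_pos_iff]
        intro h0
        exact hθ₀ne (huniq θ₀ h0)
      refine ⟨min ‖f θ₀‖ 1 / 2, by positivity, fun θ hθ => ?_⟩
      by_contra hgt
      push_neg at hgt
      have hθK : θ ∈ Ks := by
        refine ⟨?_, hgt.le⟩
        have := min_le_right ‖f θ₀‖ 1
        simp only [Set.mem_setOf_eq]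
        linarith
      have h1 : ‖f θ₀‖ ≤ ‖f θ‖ := isMinOn_iff.mp hmin θ hθK
      have h2 := min_le_left ‖f θ₀‖ 1
      linarith
  -- derivative of the Lyapunov function along a solution
  have key : ∀ w : ℝ → EuclideanSpace ℝ (Fin d), IsRegNRFlowSol d ε f A w →
      ∀ t : ℝ, 0 ≤ t →
        HasDerivAt (fun s => (⟪f (w s), f (w s)⟫ : ℝ)) (-(2 * φ (w t))) t := by
    intro w hw t ht
    have hfw : HasDerivAt (fun s => f (w s))
        (Matrix.toEuclideanCLM (𝕜 := ℝ) (A (w t))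
          (-(Matrix.toEuclideanCLM (𝕜 := ℝ)
            ((ε • (1 : Matrix (Fin d) (Fin d) ℝ) + (A (w t))ᵀ * A (w t))⁻¹ * (A (w t))ᵀ)
            (f (w t))))) t :=
      (hf (w t)).comp_hasDerivAt t (hw t ht)
    have hd := HasDerivAt.inner ℝ hfw hfw
    have hD : Matrix.toEuclideanCLM (𝕜 := ℝ) (A (w t))
        (-(Matrix.toEuclideanCLM (𝕜 := ℝ)
          ((ε • (1 : Matrix (Fin d) (Fin d) ℝ) + (A (w t))ᵀ * A (w t))⁻¹ * (A (w t))ᵀ)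
          (f (w t)))) =
        -(NRaux.T (A (w t) * (ε • 1 + (A (w t))ᵀ * A (w t))⁻¹ * (A (w t))ᵀ) (f (w t))) := by
      rw [map_neg]
      congr 1
      rw [mul_assoc, NRaux.Tmul, ContinuousLinearMap.mul_apply]
    rw [hD] at hd
    convert hd using 1
    case e'_4 => rfl
    case e'_5 => rfl
    have hcomm : (⟪-(NRaux.T (A (w t) * (ε • 1 + (A (w t))ᵀ * A (w t))⁻¹ * (A (w t))ᵀ)
        (f (w t))), f (w t)⟫ : ℝ) = -(φ (w t)) := by
      rw [inner_neg_left, hφdef]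
    have hcomm2 : (⟪f (w t), -(NRaux.T (A (w t) * (ε • 1 + (A (w t))ᵀ * A (w t))⁻¹ * (A (w t))ᵀ)
        (f (w t)))⟫ : ℝ) = -(φ (w t)) := by
      rw [inner_neg_right, hφdef, real_inner_comm]
    rw [hcomm, hcomm2]
    ring
  -- the Lyapunov function is antitone along solutions
  have hVanti : ∀ w : ℝ → EuclideanSpace ℝ (Fin d), IsRegNRFlowSol d ε f A w →
      AntitoneOn (fun s => (⟪f (w s), f (w s)⟫ : ℝ)) (Set.Ici 0) := by
    intro w hw
    apply antitoneOn_of_deriv_nonpos (convex_Ici 0)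
    · intro t ht
      exact (key w hw t ht).continuousAt.continuousWithinAt
    · intro t ht
      rw [interior_Ici] at ht
      exact (key w hw t ht.le).differentiableAt.differentiableWithinAt
    · intro t ht
      rw [interior_Ici] at ht
      rw [(key w hw t ht.le).deriv]
      have := hφ_nonneg (w t)
      linarith
  -- stability
  have hstab : ∀ δ : ℝ, 0 < δ → ∃ δ' : ℝ, 0 < δ' ∧
      ∀ w : ℝ → EuclideanSpace ℝ (Fin d), IsRegNRFlowSol d ε f A w →
        ‖w 0 - θstar‖ ≤ δ' → ∀ t : ℝ, 0 ≤ t → ‖w t - θstar‖ ≤ δ := by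
    intro δ hδ
    obtain ⟨r, hr, hrs⟩ := hR δ hδ
    refine ⟨r / (K + 1), by positivity, fun w hw hw0 t ht => ?_⟩
    have hf0 : ‖f (w 0)‖ ≤ r := by
      have h1 : ‖f (w 0) - f θstar‖ ≤ K * ‖w 0 - θstar‖ := by
        have := hLip.dist_le_mul (w 0) θstar
        rwa [dist_eq_norm, dist_eq_norm] at this
      rw [hzero, sub_zero] at h1
      have h2 : (K : ℝ) * ‖w 0 - θstar‖ ≤ K * (r / (K + 1)) :=
        mul_le_mul_of_nonneg_left hw0 K.2
      have h3 : (K : ℝ) * (r / (K + 1)) ≤ r := by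
        rw [mul_div_assoc']
        rw [div_le_iff₀ (by positivity : (0:ℝ) < (K:ℝ) + 1)]
        nlinarith [K.2, hr.le]
      linarith
    have hVt : (⟪f (w t), f (w t)⟫ : ℝ) ≤ ⟪f (w 0), f (w 0)⟫ :=
      hVanti w hw (Set.self_mem_Ici) ht ht
    have hnorm : ‖f (w t)‖ ≤ ‖f (w 0)‖ := by
      rw [real_inner_self_eq_norm_sq, real_inner_self_eq_norm_sq] at hVt
      nlinarith [norm_nonneg (f (w t)), norm_nonneg (f (w 0))]
    exact hrs _ (hnorm.trans hf0)
  refine ⟨?_, hstab⟩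
  -- convergence
  intro w hw
  set V : ℝ → ℝ := fun s => ⟪f (w s), f (w s)⟫ with hVdef
  have hanti : AntitoneOn V (Set.Ici 0) := hVanti w hw
  have hVnn : ∀ t, 0 ≤ V t := fun t => real_inner_self_nonneg
  have hVsq : ∀ t, V t = ‖f (w t)‖ ^ 2 := fun t => real_inner_self_eq_norm_sq _
  set Vt : ℝ → ℝ := fun t => V (max t 0) with hVtdef
  have hantiVt : Antitone Vt := by
    intro s t hst
    exact hanti (le_max_right s 0) (le_max_right t 0) (max_le_max hst le_rfl)
  have hbdd : BddBelow (Set.range Vt) := by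
    refine ⟨0, fun x hx => ?_⟩
    obtain ⟨t, rfl⟩ := hx
    exact hVnn _
  have hlim : Tendsto Vt atTop (𝓝 (⨅ t, Vt t)) := tendsto_atTop_ciInf hantiVt hbdd
  set L : ℝ := ⨅ t, Vt t with hLdef
  have hL0 : 0 ≤ L := le_ciInf fun t => hVnn _
  have hLle : ∀ t, L ≤ Vt t := fun t => ciInf_le hbdd t
  have hVtt : ∀ t : ℝ, 0 ≤ t → Vt t = V t := by
    intro t ht
    rw [hVtdef]
    simp [max_eq_left ht]
  have hLzero : L = 0 := by
    by_contra hLne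
    have hLpos : 0 < L := lt_of_le_of_ne hL0 (Ne.symm hLne)
    set Cs : Set (EuclideanSpace ℝ (Fin d)) :=
      {θ | ‖f θ‖ ≤ Real.sqrt (V 0)} ∩ {θ | L ≤ ‖f θ‖ ^ 2} with hCsdef
    have hCcpt : IsCompact Cs :=
      (hcoercive _).inter_right (isClosed_le continuous_const (hfc.norm.pow 2))
    have hwin : ∀ t : ℝ, 0 ≤ t → w t ∈ Cs := by
      intro t ht
      constructor
      · have h1 : V t ≤ V 0 := hanti Set.self_mem_Ici ht ht
        rw [hVsq t] at h1
        calc ‖f (w t)‖ = Real.sqrt (‖f (w t)‖ ^ 2) := (Real.sqrt_sq (norm_nonneg _)).symm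
          _ ≤ Real.sqrt (V 0) := Real.sqrt_le_sqrt h1
      · have h2 := hLle t
        rw [hVtt t ht, hVsq t] at h2
        exact h2
    obtain ⟨θ₀, hθ₀C, hmin⟩ :=
      hCcpt.exists_isMinOn ⟨w 0, hwin 0 le_rfl⟩ hφ_cont.continuousOn
    have hθ₀ne : θ₀ ≠ θstar := by
      intro h
      have h2 := hθ₀C.2
      rw [h] at h2
      simp only [Set.mem_setOf_eq, hzero, norm_zero] at h2
      nlinarith
    have hc : 0 < φ θ₀ := hφ_pos θ₀ hθ₀ne
    have hGd : ∀ t : ℝ, 0 ≤ t →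
        HasDerivAt (fun s => V s + 2 * φ θ₀ * s) (-(2 * φ (w t)) + 2 * φ θ₀) t := by
      intro t ht
      have h2 : HasDerivAt (fun s : ℝ => 2 * φ θ₀ * s) (2 * φ θ₀) t := by
        simpa using (hasDerivAt_id t).const_mul (2 * φ θ₀)
      exact (key w hw t ht).add h2
    have hG : AntitoneOn (fun s => V s + 2 * φ θ₀ * s) (Set.Ici 0) := by
      apply antitoneOn_of_deriv_nonpos (convex_Ici 0)
      · intro t ht
        exact (hGd t ht).continuousAt.continuousWithinAt
      · intro t ht
        rw [interior_Ici] at ht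
        exact (hGd t ht.le).differentiableAt.differentiableWithinAt
      · intro t ht
        rw [interior_Ici] at ht
        rw [(hGd t ht.le).deriv]
        have hmt : φ θ₀ ≤ φ (w t) := isMinOn_iff.mp hmin (w t) (hwin t ht.le)
        linarith
    set Tbig : ℝ := V 0 / (2 * φ θ₀) + 1 with hTdef
    have hTpos : 0 ≤ Tbig := by
      have h := div_nonneg (hVnn 0) (by positivity : (0:ℝ) ≤ 2 * φ θ₀)
      rw [hTdef]
      linarith
    have hGineq : V Tbig + 2 * φ θ₀ * Tbig ≤ V 0 + 2 * φ θ₀ * 0 :=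
      hG Set.self_mem_Ici hTpos hTpos
    have h2cT : 2 * φ θ₀ * Tbig = V 0 + 2 * φ θ₀ := by
      rw [hTdef]
      field_simp
    have := hVnn Tbig
    rw [h2cT] at hGineq
    linarith
  have hVtend : Tendsto V atTop (𝓝 0) := by
    have hEq : Vt =ᶠ[atTop] V := by
      filter_upwards [eventually_ge_atTop (0:ℝ)] with t ht
      exact hVtt t ht
    have := hlim.congr' hEq
    rwa [hLzero] at this
  rw [Metric.tendsto_atTop]
  intro δ hδ
  obtain ⟨r, hr, hrs⟩ := hR (δ / 2) (half_pos hδ)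
  have hev : ∀ᶠ t in atTop, V t < r ^ 2 ∧ (0:ℝ) ≤ t :=
    (hVtend.eventually_lt_const (by positivity : (0:ℝ) < r ^ 2)).and (eventually_ge_atTop 0)
  obtain ⟨N, hN⟩ := eventually_atTop.mp hev
  refine ⟨N, fun t ht => ?_⟩
  obtain ⟨h1, h2⟩ := hN t ht
  have hfn : ‖f (w t)‖ ≤ r := by
    rw [hVsq t] at h1
    nlinarith [norm_nonneg (f (w t))]
  have := hrs _ hfn
  rw [dist_eq_norm]
  linarith
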